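/- arXiv:1510.01282 — 2 statements merged into one kernel-verified Lean document; each statement's English description precedes it below -/
import Mathlib

section
/- Let G ∈ B^+(H). For every X ∈ B^+(H): (1) τ_G(X):G = 0; (2) τ_G(X) ≤ X, with τ_G(X) = X if and only if ran X^{1/2} ∩ ran G^{1/2} = {0}; (3) τ_G(τ_G(X)) = τ_G(X); (4) τ_G(μ_G(X)) = τ_G(X). -/
open Filter Topology

variable {H : Type*} [NormedAddCommGroup H] [InnerProductSpace ℂ H] [CompleteSpace H]

/-- `P` is the parallel sum `X : G` of `X` and `G`. -/
def IsParallelSum (X G P : H →L[ℂ] H) : Prop :=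
  P.IsPositive ∧ ∀ h : H,
    IsGLB {r : ℝ | ∃ f g : H, f + g = h ∧
        r = (inner ℂ (X f) f : ℂ).re + (inner ℂ (G g) g : ℂ).re}
      ((inner ℂ (P h) h : ℂ).re)

/-- `S` is the (unique) nonnegative square root of `X`. -/
def IsSqrtOf (S X : H →L[ℂ] H) : Prop := S.IsPositive ∧ S * S = X

/-- The orbit of `F 0` under the map `μ_G : X ↦ X - X:G`. -/
def IsMuOrbit (G : H →L[ℂ] H) (F : ℕ → H →L[ℂ] H) : Prop :=
  ∀ n : ℕ, ∃ P : H →L[ℂ] H, IsParallelSum (F n) G P ∧ F (n + 1) = F n - P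

/-- `L = τ_G(X)` : the strong limit of the iterates `μ_G^[n](X)`. -/
def IsTau (G X L : H →L[ℂ] H) : Prop :=
  ∃ F : ℕ → H →L[ℂ] H, F 0 = X ∧ IsMuOrbit G F ∧
    ∀ x : H, Tendsto (fun n => F n x) atTop (𝓝 (L x))

/-- `P` is the orthogonal projection of `H` onto the subspace `M`. -/
def IsOrthProjOnto (M : Submodule ℂ H) (P : H →L[ℂ] H) : Prop :=
  ∀ x : H, P x ∈ M ∧ x - P x ∈ Mᗮ

set_option linter.unusedSectionVars false

namespace Stmt13Aux

noncomputable def qf (T : H →L[ℂ] H) (h : H) : ℝ := (inner ℂ (T h) h : ℂ).re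

def pset (X G : H →L[ℂ] H) (h : H) : Set ℝ :=
  {r : ℝ | ∃ f g : H, f + g = h ∧
      r = (inner ℂ (X f) f : ℂ).re + (inner ℂ (G g) g : ℂ).re}

lemma psum_iff {X G P : H →L[ℂ] H} :
    IsParallelSum X G P ↔ P.IsPositive ∧ ∀ h, IsGLB (pset X G h) (qf P h) := Iff.rfl

lemma qf_nonneg {T : H →L[ℂ] H} (hT : T.IsPositive) (h : H) : 0 ≤ qf T h := by
  simpa [ContinuousLinearMap.reApplyInnerSelf, qf] using hT.2 h

lemma qf_sub (T S : H →L[ℂ] H) (h : H) : qf (T - S) h = qf T h - qf S h := by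
  simp [qf, inner_sub_left]

lemma qf_zero (h : H) : qf (0 : H →L[ℂ] H) h = 0 := by simp [qf]

lemma qf_mem_pset (X G : H →L[ℂ] H) (h : H) : qf X h ∈ pset X G h :=
  ⟨h, 0, add_zero h, by simp [qf]⟩

lemma pset_nonneg {X G : H →L[ℂ] H} (hX : X.IsPositive) (hG : G.IsPositive) {h : H}
    {r : ℝ} (hr : r ∈ pset X G h) : 0 ≤ r := by
  obtain ⟨f, g, -, rfl⟩ := hr
  exact add_nonneg (qf_nonneg hX f) (qf_nonneg hG g)

lemma inner_self_real {T : H →L[ℂ] H} (hT : IsSelfAdjoint T) (h : H) :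
    (inner ℂ (T h) h : ℂ) = (qf T h : ℝ) := by
  have hs := (ContinuousLinearMap.isSelfAdjoint_iff_isSymmetric.mp hT)
  have h1 : (starRingEnd ℂ) (inner ℂ (T h) h : ℂ) = (inner ℂ (T h) h : ℂ) := by
    rw [inner_conj_symm]
    exact (hs h h).symm
  have him : (inner ℂ (T h) h : ℂ).im = 0 := by
    have := congrArg Complex.im h1
    simp only [Complex.conj_im] at this
    linarith
  exact Complex.ext (by simp [qf]) (by simp [him])

lemma eq_of_forall_qf_eq {T S : H →L[ℂ] H} (hT : IsSelfAdjoint T) (hS : IsSelfAdjoint S)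
    (h : ∀ x, qf T x = qf S x) : T = S := by
  have hz : ∀ x : H, (inner ℂ ((T - S) x) x : ℂ) = 0 := by
    intro x
    rw [inner_self_real (hT.sub hS) x, qf_sub, h x, sub_self]
    norm_num
  have : ((T - S : H →L[ℂ] H) : H →ₗ[ℂ] H) = 0 :=
    (inner_map_self_eq_zero _).mp (by intro x; exact hz x)
  have : (T - S : H →L[ℂ] H) = 0 := by
    ext x
    have := congrFun (congrArg (fun (f : H →ₗ[ℂ] H) => f.toFun) this) x
    simpa using this
  exact sub_eq_zero.mp this

lemma psum_unique {X G P P' : H →L[ℂ] H} (h1 : IsParallelSum X G P)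
    (h2 : IsParallelSum X G P') : P = P' :=
  eq_of_forall_qf_eq h1.1.isSelfAdjoint h2.1.isSelfAdjoint fun x => (h1.2 x).unique (h2.2 x)

lemma orbit_unique {G : H →L[ℂ] H} {F F' : ℕ → H →L[ℂ] H} (hF : IsMuOrbit G F)
    (hF' : IsMuOrbit G F') (h0 : F 0 = F' 0) : ∀ n, F n = F' n := by
  intro n
  induction n with
  | zero => exact h0
  | succ n ih =>
    obtain ⟨P, hP, hs⟩ := hF n
    obtain ⟨P', hP', hs'⟩ := hF' n
    have hPP : P = P' := psum_unique (ih ▸ hP) hP'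
    rw [hs, hs', ih, hPP]

lemma const_orbit {X G : H →L[ℂ] H} (h0 : IsParallelSum X G 0) :
    IsMuOrbit G (fun _ => X) := fun _ => ⟨0, h0, by simp⟩

lemma qf_sqrt {S X : H →L[ℂ] H} (hS : IsSqrtOf S X) (f : H) :
    (inner ℂ (X f) f : ℂ).re = ‖S f‖ ^ 2 := by
  have hs := hS.1.1
  rw [← hS.2]
  have : (inner ℂ ((S * S) f) f : ℂ) = inner ℂ (S f) (S f) := by
    rw [ContinuousLinearMap.mul_apply]
    exact hs (S f) f
  rw [this]
  exact inner_self_eq_norm_sq (𝕜 := ℂ) (S f)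

lemma qf_glb_zero_iff_psum_zero {X G : H →L[ℂ] H} :
    IsParallelSum X G 0 ↔ ((0 : H →L[ℂ] H).IsPositive ∧ ∀ h, IsGLB (pset X G h) 0) := by
  rw [psum_iff]
  simp [qf_zero]

lemma ranges_of_psum_zero {X G Sx Sg : H →L[ℂ] H}
    (hSx : IsSqrtOf Sx X) (hSg : IsSqrtOf Sg G)
    (h0 : IsParallelSum X G 0) :
    Set.range ⇑Sx ∩ Set.range ⇑Sg = {0} := by
  have hglb : ∀ h, IsGLB (pset X G h) 0 := (qf_glb_zero_iff_psum_zero.mp h0).2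
  have hsx := hSx.1.1
  have hsg := hSg.1.1
  apply Set.eq_singleton_iff_unique_mem.mpr
  constructor
  · exact ⟨⟨0, map_zero _⟩, ⟨0, map_zero _⟩⟩
  · rintro u ⟨⟨a, rfl⟩, b, hb⟩
    by_contra hu
    -- key bound: for any splitting f + g = Sx a,
    -- ‖Sx a‖^2 ≤ ‖a‖ * ‖Sx f‖ + ‖b‖ * ‖Sg g‖
    have key : ∀ f g : H, f + g = Sx a →
        ‖Sx a‖ ^ 2 ≤ ‖a‖ * ‖Sx f‖ + ‖b‖ * ‖Sg g‖ := by
      intro f g hfg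
      have e1 : (inner ℂ (Sx a) (Sx a) : ℂ) = inner ℂ (Sx a) f + inner ℂ (Sg b) g := by
        rw [hb, ← inner_add_right, hfg]
      have e2 : (inner ℂ (Sx a) f : ℂ) = inner ℂ a (Sx f) := hsx a f
      have e3 : (inner ℂ (Sg b) g : ℂ) = inner ℂ b (Sg g) := hsg b g
      have e4 : ‖Sx a‖ ^ 2 = ((inner ℂ (Sx a) (Sx a) : ℂ)).re :=
        (inner_self_eq_norm_sq (𝕜 := ℂ) (Sx a)).symm
      rw [e4, e1, e2, e3, Complex.add_re]
      have b1 := re_inner_le_norm (𝕜 := ℂ) a (Sx f)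
      have b2 := re_inner_le_norm (𝕜 := ℂ) b (Sg g)
      exact add_le_add b1 b2
    have ha : a ≠ 0 := by rintro rfl; simp at hu
    have hc : 0 < ‖a‖ + ‖b‖ := add_pos_of_pos_of_nonneg (norm_pos_iff.mpr ha) (norm_nonneg b)
    set δ : ℝ := ‖Sx a‖ ^ 2 / (‖a‖ + ‖b‖) with hδ
    have hδpos : 0 < δ := by
      apply div_pos _ hc
      have hn : 0 < ‖Sx a‖ := norm_pos_iff.mpr hu
      positivity
    -- find an element of the pset smaller than δ^2
    obtain ⟨r, hrmem, -, hrlt⟩ := (hglb (Sx a)).exists_between (b := δ ^ 2) (pow_pos hδpos 2)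
    obtain ⟨f, g, hfg, rfl⟩ := hrmem
    rw [qf_sqrt hSx f, qf_sqrt hSg g] at hrlt
    have hxf : ‖Sx f‖ < δ := by
      have h2 : ‖Sx f‖ ^ 2 < δ ^ 2 := by nlinarith [sq_nonneg ‖Sg g‖]
      exact lt_of_pow_lt_pow_left₀ 2 hδpos.le h2
    have hgg : ‖Sg g‖ < δ := by
      have h2 : ‖Sg g‖ ^ 2 < δ ^ 2 := by nlinarith [sq_nonneg ‖Sx f‖]
      exact lt_of_pow_lt_pow_left₀ 2 hδpos.le h2
    have hub := key f g hfg
    have : ‖a‖ * ‖Sx f‖ + ‖b‖ * ‖Sg g‖ < (‖a‖ + ‖b‖) * δ := by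
      have h1 : ‖a‖ * ‖Sx f‖ < ‖a‖ * δ :=
        mul_lt_mul_of_pos_left hxf (norm_pos_iff.mpr ha)
      have h2 : ‖b‖ * ‖Sg g‖ ≤ ‖b‖ * δ :=
        mul_le_mul_of_nonneg_left hgg.le (norm_nonneg b)
      nlinarith
    rw [hδ, mul_div_cancel₀ _ (ne_of_gt hc)] at this
    linarith

lemma symm_inner {S : H →L[ℂ] H} (hS : IsSelfAdjoint S) (x y : H) :
    (inner ℂ (S x) y : ℂ) = inner ℂ x (S y) :=
  (ContinuousLinearMap.isSelfAdjoint_iff_isSymmetric.mp hS) x y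

lemma psum_zero_of_ranges {X G Sx Sg : H →L[ℂ] H}
    (hSx : IsSqrtOf Sx X) (hSg : IsSqrtOf Sg G)
    (hr : Set.range ⇑Sx ∩ Set.range ⇑Sg = {0}) :
    IsParallelSum X G 0 := by
  rw [qf_glb_zero_iff_psum_zero]
  refine ⟨ContinuousLinearMap.isPositive_zero, fun h => ⟨?_, ?_⟩⟩
  · rintro r ⟨f, g, -, rfl⟩
    rw [qf_sqrt hSx f, qf_sqrt hSg g]
    positivity
  intro b hb
  by_contra hbpos
  push_neg at hbpos
  have hsx := hSx.1.1
  have hsg := hSg.1.1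
  set B : H →ₗ[ℂ] WithLp 2 (H × H) :=
    (WithLp.linearEquiv 2 ℂ (H × H)).symm.toLinearMap ∘ₗ
      ((Sx : H →ₗ[ℂ] H).prod (Sg : H →ₗ[ℂ] H)) with hB
  have hBfst : ∀ f : H, (B f).fst = Sx f := fun _ => rfl
  have hBsnd : ∀ f : H, (B f).snd = Sg f := fun _ => rfl
  set K : Submodule ℂ (WithLp 2 (H × H)) := LinearMap.range B with hK
  set pt : WithLp 2 (H × H) := (WithLp.equiv 2 (H × H)).symm (0, Sg h) with hpt
  have hptfst : pt.fst = 0 := rfl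
  have hptsnd : pt.snd = Sg h := rfl
  have hmem : pt ∈ Kᗮᗮ := by
    rw [Submodule.mem_orthogonal]
    intro y hy
    have hy1 : ∀ f : H, (inner ℂ (B f) y : ℂ) = 0 := fun f =>
      (Submodule.mem_orthogonal K y).mp hy (B f) ⟨f, rfl⟩
    have hw : Sx y.fst + Sg y.snd = 0 := by
      have key : ∀ f : H, (inner ℂ f (Sx y.fst + Sg y.snd) : ℂ) = 0 := by
        intro f
        have h1 := hy1 f
        rw [WithLp.prod_inner_apply] at h1
        change inner ℂ (B f).fst y.fst + inner ℂ (B f).snd y.snd = 0 at h1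
        rw [hBfst, hBsnd] at h1
        rw [inner_add_right, ← symm_inner hSx.1.isSelfAdjoint f y.fst, ← symm_inner hSg.1.isSelfAdjoint f y.snd]
        exact h1
      exact inner_self_eq_zero.mp (key _)
    have hSgy : Sg y.snd = 0 := by
      have hmem2 : Sg y.snd ∈ Set.range ⇑Sx ∩ Set.range ⇑Sg := by
        refine ⟨⟨-y.fst, ?_⟩, ⟨y.snd, rfl⟩⟩
        rw [map_neg]
        exact (eq_neg_of_add_eq_zero_right hw).symm
      rw [hr] at hmem2
      exact hmem2
    rw [WithLp.prod_inner_apply]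
    change inner ℂ y.fst pt.fst + inner ℂ y.snd pt.snd = 0
    rw [hptfst, hptsnd, inner_zero_right, ← symm_inner hSg.1.isSelfAdjoint y.snd h, hSgy,
      inner_zero_left]
    simp
  rw [Submodule.orthogonal_orthogonal_eq_closure] at hmem
  have hcl : pt ∈ closure (K : Set (WithLp 2 (H × H))) := by
    rwa [← Submodule.topologicalClosure_coe, SetLike.mem_coe]
  obtain ⟨z, hzK, hdz⟩ := Metric.mem_closure_iff.mp hcl (Real.sqrt b) (Real.sqrt_pos.mpr hbpos)
  obtain ⟨f, rfl⟩ := hzK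
  have hd2 : dist pt (B f) ^ 2 < b := by
    have h2 := pow_lt_pow_left₀ hdz dist_nonneg (two_ne_zero)
    rwa [Real.sq_sqrt hbpos.le] at h2
  have hdist : dist pt (B f) ^ 2 = ‖Sx f‖ ^ 2 + ‖Sg (h - f)‖ ^ 2 := by
    rw [dist_eq_norm, WithLp.prod_norm_sq_eq_of_L2, WithLp.sub_fst, WithLp.sub_snd,
      hptfst, hptsnd, hBfst, hBsnd, zero_sub, norm_neg, map_sub]
  have hrb : ‖Sx f‖ ^ 2 + ‖Sg (h - f)‖ ^ 2 ∈ pset X G h := by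
    refine ⟨f, h - f, by abel, ?_⟩
    rw [qf_sqrt hSx f, qf_sqrt hSg (h - f)]
  have := hb hrb
  rw [← hdist] at this
  linarith

lemma psum_qf_le {X G P : H →L[ℂ] H} (h : IsParallelSum X G P) (x : H) :
    qf P x ≤ qf X x :=
  (h.2 x).1 (qf_mem_pset X G x)

end Stmt13Aux

open Stmt13Aux

/-- Theorem 3, properties (1)–(4) of the paper. For every `X ∈ B⁺(H)`:
`τ_G(X) : G = 0`; `τ_G(X) ≤ X` with equality iff `ran X^{1/2} ∩ ran G^{1/2} = {0}`;
`τ_G(τ_G(X)) = τ_G(X)`; and `τ_G(μ_G(X)) = τ_G(X)`. -/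
theorem stmt13 (G X L : H →L[ℂ] H)
    (hG : G.IsPositive) (hX : X.IsPositive)
    (hL : IsTau G X L) :
    IsParallelSum L G 0 ∧
    (X - L).IsPositive ∧
    (∀ Sx Sg : H →L[ℂ] H, IsSqrtOf Sx X → IsSqrtOf Sg G →
      (L = X ↔ Set.range ⇑Sx ∩ Set.range ⇑Sg = {0})) ∧
    (∀ L' : H →L[ℂ] H, IsTau G L L' → L' = L) ∧
    (∀ P L' : H →L[ℂ] H, IsParallelSum X G P → IsTau G (X - P) L' → L' = L) := by
  obtain ⟨F, hF0, hFo, hFlim⟩ := hL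
  choose P hP hFs using hFo
  have hFo' : IsMuOrbit G F := fun n => ⟨P n, hP n, hFs n⟩
  -- positivity of the orbit
  have hFpos : ∀ n, (F n).IsPositive := by
    intro n
    induction n with
    | zero => rwa [hF0]
    | succ n ih =>
      rw [hFs n]
      refine ⟨ContinuousLinearMap.isSelfAdjoint_iff_isSymmetric.mp (ih.isSelfAdjoint.sub (hP n).1.isSelfAdjoint), fun x => ?_⟩
      have h1 : qf (P n) x ≤ qf (F n) x := psum_qf_le (hP n) x
      have h2 : 0 ≤ qf (F n - P n) x := by rw [qf_sub]; linarith
      simpa [ContinuousLinearMap.reApplyInnerSelf, qf, inner_sub_left] using h2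
  -- monotonicity
  have hqmono : ∀ x, Antitone fun n => qf (F n) x := by
    intro x
    apply antitone_nat_of_succ_le
    intro n
    rw [hFs n, qf_sub]
    linarith [qf_nonneg (hP n).1 x]
  -- convergence of quadratic forms
  have hqlim : ∀ x, Tendsto (fun n => qf (F n) x) atTop (𝓝 (qf L x)) := by
    intro x
    have h1 : Tendsto (fun n => (inner ℂ (F n x) x : ℂ)) atTop (𝓝 (inner ℂ (L x) x : ℂ)) :=
      (hFlim x).inner tendsto_const_nhds
    exact (Complex.continuous_re.tendsto _).comp h1
  have hLleF : ∀ n x, qf L x ≤ qf (F n) x := by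
    intro n x
    apply le_of_tendsto (hqlim x)
    filter_upwards [eventually_ge_atTop n] with m hm
    exact hqmono x hm
  -- L is positive
  have hLsa : IsSelfAdjoint L := by
    rw [ContinuousLinearMap.isSelfAdjoint_iff_isSymmetric]
    intro x y
    have h1 : Tendsto (fun n => (inner ℂ (F n x) y : ℂ)) atTop (𝓝 (inner ℂ (L x) y : ℂ)) :=
      (hFlim x).inner tendsto_const_nhds
    have h2 : Tendsto (fun n => (inner ℂ (F n x) y : ℂ)) atTop (𝓝 (inner ℂ x (L y) : ℂ)) := by
      have h3 : Tendsto (fun n => (inner ℂ x (F n y) : ℂ)) atTop (𝓝 (inner ℂ x (L y) : ℂ)) :=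
        Tendsto.inner tendsto_const_nhds (hFlim y)
      exact h3.congr fun n => (symm_inner (hFpos n).isSelfAdjoint x y).symm
    exact tendsto_nhds_unique h1 h2
  have hLpos : L.IsPositive := by
    refine ⟨ContinuousLinearMap.isSelfAdjoint_iff_isSymmetric.mp hLsa, fun x => ?_⟩
    have h1 : 0 ≤ qf L x :=
      ge_of_tendsto' (hqlim x) fun n => qf_nonneg (hFpos n) x
    simpa [ContinuousLinearMap.reApplyInnerSelf, qf] using h1
  -- the parallel sums tend to zero in form
  have hPlim : ∀ x, Tendsto (fun n => qf (P n) x) atTop (𝓝 0) := by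
    intro x
    have h1 : Tendsto (fun n => qf (F n) x - qf (F (n + 1)) x) atTop
        (𝓝 (qf L x - qf L x)) :=
      (hqlim x).sub ((hqlim x).comp (tendsto_add_atTop_nat 1))
    rw [sub_self] at h1
    refine h1.congr fun n => ?_
    have h3 : qf (F (n + 1)) x = qf (F n - P n) x := congrArg (fun T => qf T x) (hFs n)
    rw [qf_sub] at h3
    linarith
  -- conjunct 1 : L : G = 0
  have conj1 : IsParallelSum L G 0 := by
    rw [qf_glb_zero_iff_psum_zero]
    refine ⟨ContinuousLinearMap.isPositive_zero, fun h => ⟨?_, ?_⟩⟩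
    · rintro r ⟨f, g, -, rfl⟩
      exact add_nonneg (qf_nonneg hLpos f) (qf_nonneg hG g)
    · intro c hc
      by_contra hcpos
      push_neg at hcpos
      obtain ⟨n, hn⟩ := ((hPlim h).eventually (eventually_lt_nhds hcpos)).exists
      obtain ⟨r, hrmem, -, hrlt⟩ := ((hP n).2 h).exists_between hn
      obtain ⟨f, g, hfg, rfl⟩ := hrmem
      have hmem' : qf L f + qf G g ∈ pset L G h := ⟨f, g, hfg, rfl⟩
      have h1 := hc hmem'
      have h2 := hLleF n f
      simp only [qf] at h1 h2 ⊢
      linarith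
  refine ⟨conj1, ?_, ?_, ?_, ?_⟩
  -- conjunct 2 : L ≤ X
  · refine ⟨ContinuousLinearMap.isSelfAdjoint_iff_isSymmetric.mp (hX.isSelfAdjoint.sub hLsa), fun x => ?_⟩
    have h1 : qf L x ≤ qf X x := hF0 ▸ hLleF 0 x
    have h2 : 0 ≤ qf (X - L) x := by rw [qf_sub]; linarith
    simpa [ContinuousLinearMap.reApplyInnerSelf, qf, inner_sub_left] using h2
  -- conjunct 3
  · intro Sx Sg hSx hSg
    constructor
    · intro hLX
      exact ranges_of_psum_zero hSx hSg (hLX ▸ conj1)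
    · intro hr
      have h0 : IsParallelSum X G 0 := psum_zero_of_ranges hSx hSg hr
      have heq : ∀ n, F n = X := orbit_unique hFo' (const_orbit h0) hF0
      ext x
      refine tendsto_nhds_unique (hFlim x) ?_
      simp only [heq]
      exact tendsto_const_nhds
  -- conjunct 4
  · intro L' hL'
    obtain ⟨F', hF'0, hF'o, hF'lim⟩ := hL'
    have heq : ∀ n, F' n = L := orbit_unique hF'o (const_orbit conj1) hF'0
    ext x
    have h1 : Tendsto (fun _ : ℕ => L x) atTop (𝓝 (L' x)) := by
      have := hF'lim x
      simp only [heq] at this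
      exact this
    exact tendsto_nhds_unique h1 tendsto_const_nhds
  -- conjunct 5
  · intro Pp L' hPp hL'
    obtain ⟨F', hF'0, hF'o, hF'lim⟩ := hL'
    have hP0 : IsParallelSum X G (P 0) := hF0 ▸ hP 0
    have hPeq : Pp = P 0 := psum_unique hPp hP0
    have hF'0' : F' 0 = F 1 := by rw [hF'0, hPeq, hFs 0, hF0]
    have hshift : IsMuOrbit G fun n => F (n + 1) := fun n => ⟨P (n + 1), hP (n + 1), hFs (n + 1)⟩
    have heq : ∀ n, F' n = F (n + 1) := orbit_unique hF'o hshift hF'0'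
    ext x
    have h1 : Tendsto (fun n => F (n + 1) x) atTop (𝓝 (L x)) :=
      (hFlim x).comp (tendsto_add_atTop_nat 1)
    have h2 : Tendsto (fun n => F (n + 1) x) atTop (𝓝 (L' x)) := by
      have := hF'lim x
      simp only [heq] at this
      exact this
    exact tendsto_nhds_unique h2 h1
end

section
/- Let G ∈ B^+(H). For every X ∈ B^+(H), τ_G(X) = X − [G]X, where [G]X denotes the strong (pointwise) limit of the non-decreasing sequence (nG):X as n → ∞ (which exists since (nG):X ≤ X for all n). Moreover, the series Σ_{n=0}^∞ (μ_G^{[n]}(X)):G converges strongly and its sum equals [G]X. -/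
open Filter Topology
set_option linter.unusedSectionVars false
set_option maxHeartbeats 1000000

variable {H : Type*} [NormedAddCommGroup H] [InnerProductSpace ℂ H] [CompleteSpace H]

/-- `A = [G]X` : Ando's `G`-absolutely continuous part of `X`, the strong limit of the
(non-decreasing) sequence `(nG) : X`. -/
def IsAndoPart (G X A : H →L[ℂ] H) : Prop :=
  ∃ Q : ℕ → H →L[ℂ] H, (∀ n : ℕ, IsParallelSum ((n : ℂ) • G) X (Q n)) ∧
    ∀ x : H, Tendsto (fun n => Q n x) atTop (𝓝 (A x))


section Helpers

private lemma conj_mul_self' (a : ℂ) : (starRingEnd ℂ a) * a = ((‖a‖ ^ 2 : ℝ) : ℂ) := by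
  rw [mul_comm, Complex.mul_conj]
  norm_cast
  rw [Complex.normSq_eq_norm_sq]

private lemma sa_inner (T : H →L[ℂ] H) (hT : IsSelfAdjoint T) (u v : H) :
    (inner ℂ (T u) v : ℂ) = inner ℂ u (T v) :=
  (ContinuousLinearMap.isSelfAdjoint_iff_isSymmetric.mp hT) u v

private lemma re_inner_swap (z w : H) : (inner ℂ z w : ℂ).re = (inner ℂ w z : ℂ).re := by
  rw [← inner_conj_symm w z]; exact Complex.conj_re _

private lemma form_expand (T : H →L[ℂ] H) (hT : IsSelfAdjoint T) (u v : H) :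
    (inner ℂ (T (u + v)) (u + v) : ℂ).re
      = (inner ℂ (T u) u : ℂ).re + 2 * (inner ℂ (T u) v : ℂ).re + (inner ℂ (T v) v : ℂ).re := by
  rw [map_add, inner_add_left, inner_add_right, inner_add_right]
  have h1 : (inner ℂ (T v) u : ℂ).re = (inner ℂ (T u) v : ℂ).re := by
    rw [sa_inner T hT v u]; exact re_inner_swap _ _
  simp only [Complex.add_re]
  rw [h1]; ring

private lemma form_smul (T : H →L[ℂ] H) (c : ℂ) (w : H) :
    (inner ℂ (T (c • w)) (c • w) : ℂ).re = ‖c‖ ^ 2 * (inner ℂ (T w) w : ℂ).re := by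
  rw [map_smul, inner_smul_left, inner_smul_right, ← mul_assoc, conj_mul_self',
    Complex.re_ofReal_mul]

private lemma re_smul_right (T : H →L[ℂ] H) (t : ℝ) (u w : H) :
    (inner ℂ (T u) ((t : ℂ) • w) : ℂ).re = t * (inner ℂ (T u) w : ℂ).re := by
  rw [inner_smul_right]; exact Complex.re_ofReal_mul _ _

private lemma gen_cs (T : H →L[ℂ] H) (hT : T.IsPositive) (u v : H) :
    ‖(inner ℂ (T u) v : ℂ)‖ ^ 2 ≤ (inner ℂ (T u) u : ℂ).re * (inner ℂ (T v) v : ℂ).re := by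
  set a : ℂ := inner ℂ (T u) v with ha
  by_cases h0 : a = 0
  · rw [h0]; simp; exact mul_nonneg (hT.2 u) (hT.2 v)
  · have hna : 0 < ‖a‖ := norm_pos_iff.mpr h0
    have habs : (0:ℝ) < ‖a‖ := hna
    set θ : ℂ := (starRingEnd ℂ a) / ‖a‖ with hθ
    set v' : H := θ • v with hv'
    have hav' : (inner ℂ (T u) v' : ℂ).re = ‖a‖ := by
      have : (inner ℂ (T u) v' : ℂ) = ((‖a‖ : ℝ) : ℂ) := by
        rw [hv', inner_smul_right, ← ha, hθ, div_mul_eq_mul_div, conj_mul_self']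
        rw [← Complex.ofReal_div]
        congr 1
        rw [pow_two, mul_div_assoc, div_self habs.ne', mul_one]
      rw [this, Complex.ofReal_re]
    have hfv' : (inner ℂ (T v') v' : ℂ).re = (inner ℂ (T v) v : ℂ).re := by
      rw [hv', form_smul]
      have : ‖θ‖ = 1 := by
        rw [hθ, norm_div, RCLike.norm_conj, Complex.norm_real, Real.norm_eq_abs, abs_norm]
        exact div_self hna.ne'
      rw [this]; ring
    have key : ∀ t : ℝ, 0 ≤ (inner ℂ (T u) u : ℂ).re - 2 * t * ‖a‖ + t ^ 2 * (inner ℂ (T v) v : ℂ).re := by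
      intro t
      have h : (0:ℝ) ≤ (inner ℂ (T (u + (-(t:ℂ)) • v')) (u + (-(t:ℂ)) • v') : ℂ).re := hT.2 _
      have hexp := form_expand T hT.isSelfAdjoint u ((-(t:ℂ)) • v')
      have h2 := re_smul_right T (-t) u v'
      rw [Complex.ofReal_neg] at h2
      rw [hav'] at h2
      have h3 := form_smul T (-(t:ℂ)) v'
      rw [hfv'] at h3
      have hn : ‖(-(t:ℂ))‖ ^ 2 = t ^ 2 := by
        rw [norm_neg, Complex.norm_real, Real.norm_eq_abs, sq_abs]
      rw [hn] at h3
      rw [hexp, h2, h3] at h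
      nlinarith [h]
    have hA : 0 ≤ (inner ℂ (T u) u : ℂ).re := hT.2 u
    have hB : 0 ≤ (inner ℂ (T v) v : ℂ).re := hT.2 v
    rcases eq_or_lt_of_le hB with hB0 | hBpos
    · exfalso
      have hk := key (((inner ℂ (T u) u : ℂ).re + 1) / (2 * ‖a‖))
      rw [← hB0] at hk
      have ht : ((inner ℂ (T u) u : ℂ).re + 1) / (2 * ‖a‖) * ‖a‖ = ((inner ℂ (T u) u : ℂ).re + 1) / 2 := by
        field_simp
      nlinarith [hk, ht]
    · have hk := key (‖a‖ / (inner ℂ (T v) v : ℂ).re)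
      have h1 : 2 * (‖a‖ / (inner ℂ (T v) v : ℂ).re) * ‖a‖ = 2 * (‖a‖^2 / (inner ℂ (T v) v : ℂ).re) := by
        ring
      have h2 : (‖a‖ / (inner ℂ (T v) v : ℂ).re)^2 * (inner ℂ (T v) v : ℂ).re
          = ‖a‖^2 / (inner ℂ (T v) v : ℂ).re := by
        field_simp
      rw [h1, h2] at hk
      have : ‖a‖^2 / (inner ℂ (T v) v : ℂ).re ≤ (inner ℂ (T u) u : ℂ).re := by linarith
      calc ‖a‖^2 = ‖a‖^2 / (inner ℂ (T v) v : ℂ).re * (inner ℂ (T v) v : ℂ).re := by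
            rw [div_mul_cancel₀ _ hBpos.ne']
        _ ≤ (inner ℂ (T u) u : ℂ).re * (inner ℂ (T v) v : ℂ).re := by
            exact mul_le_mul_of_nonneg_right this hB

private lemma re_le_sqrt (T : H →L[ℂ] H) (hT : T.IsPositive) (u v : H) :
    (inner ℂ (T u) v : ℂ).re ≤ Real.sqrt ((inner ℂ (T u) u : ℂ).re * (inner ℂ (T v) v : ℂ).re) := by
  have h1 : (inner ℂ (T u) v : ℂ).re ≤ ‖(inner ℂ (T u) v : ℂ)‖ := Complex.re_le_norm _
  have h2 : ‖(inner ℂ (T u) v : ℂ)‖ ≤ Real.sqrt ((inner ℂ (T u) u : ℂ).re * (inner ℂ (T v) v : ℂ).re) := by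
    rw [← Real.sqrt_sq (norm_nonneg _)]
    exact Real.sqrt_le_sqrt (gen_cs T hT u v)
  linarith

/-- form subadditivity: `φT(u+v) ≤ φT u + 2√(φT u · φT v) + φT v`. -/
private lemma form_subadd (T : H →L[ℂ] H) (hT : T.IsPositive) (u v : H) :
    (inner ℂ (T (u + v)) (u + v) : ℂ).re
      ≤ (inner ℂ (T u) u : ℂ).re + 2 * Real.sqrt ((inner ℂ (T u) u : ℂ).re * (inner ℂ (T v) v : ℂ).re)
        + (inner ℂ (T v) v : ℂ).re := by
  rw [form_expand T hT.isSelfAdjoint u v]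
  have := re_le_sqrt T hT u v
  linarith

private lemma form_neg (T : H →L[ℂ] H) (v : H) :
    (inner ℂ (T (-v)) (-v) : ℂ).re = (inner ℂ (T v) v : ℂ).re := by
  rw [map_neg, inner_neg_neg]

/-- a self-adjoint operator is determined by its real quadratic form. -/
private lemma ext_of_re_form {S T : H →L[ℂ] H} (hS : IsSelfAdjoint S) (hT : IsSelfAdjoint T)
    (h : ∀ v : H, (inner ℂ (S v) v : ℂ).re = (inner ℂ (T v) v : ℂ).re) : S = T := by
  have hU : ∀ v : H, (inner ℂ ((S - T) v) v : ℂ) = 0 := by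
    intro v
    have hre : (inner ℂ ((S - T) v) v : ℂ).re = 0 := by
      simp only [ContinuousLinearMap.sub_apply, inner_sub_left, Complex.sub_re]
      rw [h v]; ring
    have hsym : starRingEnd ℂ (inner ℂ ((S - T) v) v : ℂ) = inner ℂ ((S - T) v) v := by
      rw [inner_conj_symm, ← sa_inner _ (hS.sub hT) v v]
    have him : (inner ℂ ((S - T) v) v : ℂ).im = 0 := by
      have := congrArg Complex.im hsym
      simp only [Complex.conj_im] at this
      linarith
    exact Complex.ext hre him
  have := (inner_map_self_eq_zero ((S - T : H →L[ℂ] H) : H →ₗ[ℂ] H)).mp (fun x => hU x)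
  have h0 : (S - T : H →L[ℂ] H) = 0 := by
    exact ContinuousLinearMap.ext fun x => by simpa using LinearMap.congr_fun this x
  have := sub_eq_zero.mp h0
  exact this

/-- glb of the parallel-sum set is at most the value at any decomposition. -/
private lemma ps_le {Y G P : H →L[ℂ] H} (hPS : IsParallelSum Y G P) (f g : H) :
    (inner ℂ (P (f + g)) (f + g) : ℂ).re ≤ (inner ℂ (Y f) f : ℂ).re + (inner ℂ (G g) g : ℂ).re :=
  (hPS.2 (f + g)).1 ⟨f, g, rfl, rfl⟩

private lemma ps_le' {Y G P : H →L[ℂ] H} (hPS : IsParallelSum Y G P) (v f g : H)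
    (hfg : f + g = v) :
    (inner ℂ (P v) v : ℂ).re ≤ (inner ℂ (Y f) f : ℂ).re + (inner ℂ (G g) g : ℂ).re :=
  (hPS.2 v).1 ⟨f, g, hfg, rfl⟩

private lemma ps_approx {Y G P : H →L[ℂ] H} (hPS : IsParallelSum Y G P) (v : H) {ε : ℝ}
    (hε : 0 < ε) :
    ∃ f g : H, f + g = v ∧
      (inner ℂ (Y f) f : ℂ).re + (inner ℂ (G g) g : ℂ).re < (inner ℂ (P v) v : ℂ).re + ε := by
  by_contra hcon
  push_neg at hcon
  have hlb : (inner ℂ (P v) v : ℂ).re + ε ∈ lowerBounds {r : ℝ | ∃ f g : H, f + g = v ∧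
      r = (inner ℂ (Y f) f : ℂ).re + (inner ℂ (G g) g : ℂ).re} := by
    rintro r ⟨f, g, hfg, rfl⟩
    exact hcon f g hfg
  have := (hPS.2 v).2 hlb
  linarith

private lemma ps_nonneg {Y G P : H →L[ℂ] H} (hY : Y.IsPositive) (hG : G.IsPositive)
    (hPS : IsParallelSum Y G P) (v : H) : 0 ≤ (inner ℂ (P v) v : ℂ).re := by
  apply (hPS.2 v).2
  rintro r ⟨f, g, hfg, rfl⟩
  exact add_nonneg (hY.2 f) (hG.2 g)

private lemma ps_unique {Y G P₁ P₂ : H →L[ℂ] H} (h₁ : IsParallelSum Y G P₁)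
    (h₂ : IsParallelSum Y G P₂) : P₁ = P₂ :=
  ext_of_re_form h₁.1.isSelfAdjoint h₂.1.isSelfAdjoint (fun v => (h₁.2 v).unique (h₂.2 v))


private lemma form_nsmul (G : H →L[ℂ] H) (n : ℕ) (f : H) :
    (inner ℂ (((n : ℂ) • G) f) f : ℂ).re = (n : ℝ) * (inner ℂ (G f) f : ℂ).re := by
  rw [ContinuousLinearMap.smul_apply, inner_smul_left, map_natCast,
    show ((n : ℂ)) = ((n : ℝ) : ℂ) by push_cast; ring]
  exact Complex.re_ofReal_mul _ _

private lemma form_sub (T U : H →L[ℂ] H) (v : H) :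
    (inner ℂ ((T - U) v) v : ℂ).re = (inner ℂ (T v) v : ℂ).re - (inner ℂ (U v) v : ℂ).re := by
  simp [ContinuousLinearMap.sub_apply, inner_sub_left, Complex.sub_re]

private lemma form_zero_vec (T : H →L[ℂ] H) : (inner ℂ (T 0) 0 : ℂ).re = 0 := by simp

end Helpers

/-- Theorem 4 (1) of the paper. `τ_G(X) = X - [G]X`, and the series
`Σₙ (μ_G^{[n]}(X)) : G` converges strongly with sum `[G]X`. -/
theorem stmt16 (G X L A : H →L[ℂ] H)
    (hG : G.IsPositive) (hX : X.IsPositive)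
    (hL : IsTau G X L) (hA : IsAndoPart G X A) :
    L = X - A ∧
    ∀ F P : ℕ → H →L[ℂ] H, F 0 = X →
      (∀ n : ℕ, IsParallelSum (F n) G (P n) ∧ F (n + 1) = F n - P n) →
      ∀ x : H, HasSum (fun n => P n x) (A x) := by
  classical
  obtain ⟨F, hF0, horb, hFlim⟩ := hL
  choose P hP hrec using horb
  obtain ⟨Q, hQ, hQlim⟩ := hA
  -- self-adjointness of the orbit
  have hFsa : ∀ n, IsSelfAdjoint (F n) := by
    intro n
    induction n with
    | zero => rw [hF0]; exact hX.isSelfAdjoint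
    | succ n ih => rw [hrec n]; exact ih.sub (hP n).1.isSelfAdjoint
  have hφrec : ∀ n v, (inner ℂ (F (n+1) v) v : ℂ).re
      = (inner ℂ (F n v) v : ℂ).re - (inner ℂ (P n v) v : ℂ).re := by
    intro n v; rw [hrec n]; exact form_sub _ _ v
  have hPleF : ∀ n v, (inner ℂ (P n v) v : ℂ).re ≤ (inner ℂ (F n v) v : ℂ).re := by
    intro n v
    have := ps_le' (hP n) v v 0 (by simp)
    simpa using this
  have hPleG : ∀ n v, (inner ℂ (P n v) v : ℂ).re ≤ (inner ℂ (G v) v : ℂ).re := by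
    intro n v
    have := ps_le' (hP n) v 0 v (by simp)
    simpa using this
  have hFpos : ∀ n, (F n).IsPositive := by
    intro n
    refine ⟨ContinuousLinearMap.isSelfAdjoint_iff_isSymmetric.mp (hFsa n), ?_⟩
    intro v
    show (0:ℝ) ≤ (inner ℂ (F n v) v : ℂ).re
    induction n with
    | zero => rw [hF0]; exact hX.2 v
    | succ n ih =>
      rw [hφrec n v]
      have h1 := hPleF n v
      linarith
  have hPpos : ∀ n, (P n).IsPositive := fun n => (hP n).1
  have hPnn : ∀ n v, 0 ≤ (inner ℂ (P n v) v : ℂ).re := fun n v => (hPpos n).2 v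
  have hFanti : ∀ v m n, m ≤ n → (inner ℂ (F n v) v : ℂ).re ≤ (inner ℂ (F m v) v : ℂ).re := by
    intro v m n hmn
    induction n with
    | zero => rw [Nat.le_zero.mp hmn]
    | succ n ih =>
      rcases Nat.lt_or_ge m (n+1) with h | h
      · have := ih (by omega)
        rw [hφrec n v]
        have := hPnn n v
        linarith
      · have : m = n + 1 := by omega
        rw [this]
  have hFtend : ∀ v, Tendsto (fun n => (inner ℂ (F n v) v : ℂ).re) atTop (𝓝 ((inner ℂ (L v) v : ℂ).re)) := by
    intro v
    exact (Complex.continuous_re.tendsto _).comp ((hFlim v).inner tendsto_const_nhds)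
  have hQtend : ∀ v, Tendsto (fun n => (inner ℂ (Q n v) v : ℂ).re) atTop (𝓝 ((inner ℂ (A v) v : ℂ).re)) := by
    intro v
    exact (Complex.continuous_re.tendsto _).comp ((hQlim v).inner tendsto_const_nhds)
  have hLleF : ∀ n v, (inner ℂ (L v) v : ℂ).re ≤ (inner ℂ (F n v) v : ℂ).re := by
    intro n v
    refine le_of_tendsto (hFtend v) ?_
    filter_upwards [eventually_ge_atTop n] with m hm
    exact hFanti v n m hm
  have hmG : ∀ m : ℕ, ((m : ℂ) • G).IsPositive := by
    intro m
    constructor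
    · exact ContinuousLinearMap.isSelfAdjoint_iff_isSymmetric.mp (IsSelfAdjoint.smul (IsSelfAdjoint.natCast m) hG.isSelfAdjoint)
    · intro v
      show (0:ℝ) ≤ (inner ℂ (((m : ℂ) • G) v) v : ℂ).re
      rw [form_nsmul]
      exact mul_nonneg (Nat.cast_nonneg m) (hG.2 v)
  have hQnn : ∀ m v, 0 ≤ (inner ℂ (Q m v) v : ℂ).re := fun m v => ps_nonneg (hmG m) hX (hQ m) v
  have hQleX : ∀ m v, (inner ℂ (Q m v) v : ℂ).re ≤ (inner ℂ (X v) v : ℂ).re := by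
    intro m v
    have := ps_le' (hQ m) v 0 v (by simp)
    simpa using this
  have hQmono : ∀ v m m', m ≤ m' → (inner ℂ (Q m v) v : ℂ).re ≤ (inner ℂ (Q m' v) v : ℂ).re := by
    intro v m m' hmm
    apply (hQ m').2 v |>.2
    rintro r ⟨f, g, hfg, rfl⟩
    have h1 := ps_le' (hQ m) v f g hfg
    rw [form_nsmul] at h1 ⊢
    have : (m : ℝ) * (inner ℂ (G f) f : ℂ).re ≤ (m' : ℝ) * (inner ℂ (G f) f : ℂ).re :=
      mul_le_mul_of_nonneg_right (by exact_mod_cast hmm) (hG.2 f)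
    linarith
  have hQleA : ∀ m v, (inner ℂ (Q m v) v : ℂ).re ≤ (inner ℂ (A v) v : ℂ).re := by
    intro m v
    refine ge_of_tendsto (hQtend v) ?_
    filter_upwards [eventually_ge_atTop m] with m' hm'
    exact hQmono v m m' hm'
  have hAnn : ∀ v, 0 ≤ (inner ℂ (A v) v : ℂ).re := fun v => le_trans (hQnn 0 v) (hQleA 0 v)
  -- the partial-sum operators S n = X - F n
  have hSform : ∀ n v, (inner ℂ ((X - F n) v) v : ℂ).re
      = (inner ℂ (X v) v : ℂ).re - (inner ℂ (F n v) v : ℂ).re := fun n v => form_sub _ _ v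
  have hSpos : ∀ n, (X - F n).IsPositive := by
    intro n
    refine ⟨ContinuousLinearMap.isSelfAdjoint_iff_isSymmetric.mp (hX.isSelfAdjoint.sub (hFsa n)), ?_⟩
    intro v
    show (0:ℝ) ≤ (inner ℂ ((X - F n) v) v : ℂ).re
    rw [hSform]
    have := hFanti v 0 n (Nat.zero_le n)
    rw [hF0] at this
    linarith
  have hSrec : ∀ n v, (inner ℂ ((X - F (n+1)) v) v : ℂ).re
      = (inner ℂ ((X - F n) v) v : ℂ).re + (inner ℂ (P n v) v : ℂ).re := by
    intro n v
    rw [hSform, hSform, hφrec n v]; ring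
  have hSleG : ∀ n v, (inner ℂ ((X - F n) v) v : ℂ).re ≤ (n : ℝ) * (inner ℂ (G v) v : ℂ).re := by
    intro n v
    induction n with
    | zero => rw [hSform, hF0]; simp
    | succ n ih =>
      rw [hSrec n v, Nat.cast_succ]
      have := hPleG n v
      linarith
  have hSleX : ∀ n v, (inner ℂ ((X - F n) v) v : ℂ).re ≤ (inner ℂ (X v) v : ℂ).re := by
    intro n v
    rw [hSform]
    have h0 : (0:ℝ) ≤ (inner ℂ (F n v) v : ℂ).re := (hFpos n).2 v
    linarith
  -- claim β :  S n ≤ A in form sense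
  have claimβ : ∀ n v, (inner ℂ ((X - F n) v) v : ℂ).re ≤ (inner ℂ (A v) v : ℂ).re := by
    have main : ∀ n v, (inner ℂ ((X - F (n+1)) v) v : ℂ).re ≤ (inner ℂ (A v) v : ℂ).re := by
      intro n w
      refine le_of_forall_pos_le_add ?_
      intro ε hε
      have hxwnn : 0 ≤ (inner ℂ (X w) w : ℂ).re := hX.2 w
      set B : ℝ := (inner ℂ (X w) w : ℂ).re + 1 with hB
      have hBpos : 0 < B := by linarith
      set r : ℝ := min (ε/3) ((ε/6)^2 / B) with hr
      have hrpos : 0 < r := lt_min (by linarith) (div_pos (by positivity) hBpos)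
      obtain ⟨m₀, hm₀⟩ := exists_nat_ge ((n : ℝ) * B / r)
      set m := max m₀ 1 with hm
      have hm1' : (1:ℝ) ≤ (m:ℝ) := by
        have : 1 ≤ m := le_max_right _ _
        exact_mod_cast this
      have hmpos : (0:ℝ) < m := by linarith
      have hmr : (n:ℝ) * B ≤ m * r := by
        have h1 : ((m₀:ℝ)) ≤ m := by
          have : m₀ ≤ m := le_max_left _ _
          exact_mod_cast this
        have h2 : (n:ℝ) * B / r ≤ m := le_trans hm₀ h1
        calc (n:ℝ)*B = ((n:ℝ)*B/r)*r := by rw [div_mul_cancel₀ _ hrpos.ne']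
          _ ≤ m * r := mul_le_mul_of_nonneg_right h2 hrpos.le
      have hδpos : (0:ℝ) < min 1 (ε/3) := lt_min one_pos (by linarith)
      obtain ⟨f, g, hfg, happ⟩ := ps_approx (hQ m) w hδpos
      rw [form_nsmul] at happ
      set δ : ℝ := min 1 (ε/3) with hδ
      have hγfnn : 0 ≤ (inner ℂ (G f) f : ℂ).re := hG.2 f
      have hxgnn : 0 ≤ (inner ℂ (X g) g : ℂ).re := hX.2 g
      have hqa := hQleA m w
      have hqx := hQleX m w
      have hδ1 : δ ≤ 1 := min_le_left _ _
      have hδε : δ ≤ ε/3 := min_le_right _ _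
      have hrε : r ≤ ε/3 := min_le_left _ _
      have hmB : (m:ℝ) * (inner ℂ (G f) f : ℂ).re ≤ B := by linarith
      have hsnf : (inner ℂ ((X - F n) f) f : ℂ).re ≤ r := by
        have h1 := hSleG n f
        have h2 : (n:ℝ) * (inner ℂ (G f) f : ℂ).re * (m:ℝ) ≤ r * m := by
          have e : (n:ℝ) * (inner ℂ (G f) f : ℂ).re * (m:ℝ)
              = (n:ℝ) * ((m:ℝ) * (inner ℂ (G f) f : ℂ).re) := by ring
          rw [e]
          calc (n:ℝ) * ((m:ℝ) * (inner ℂ (G f) f : ℂ).re) ≤ (n:ℝ) * B :=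
                mul_le_mul_of_nonneg_left hmB (Nat.cast_nonneg n)
            _ ≤ m * r := hmr
            _ = r * m := by ring
        have h3 : (n:ℝ) * (inner ℂ (G f) f : ℂ).re ≤ r := le_of_mul_le_mul_right h2 hmpos
        linarith
      have hsng : (inner ℂ ((X - F n) g) g : ℂ).re ≤ B := by
        have h1 := hSleX n g
        have h2 : 0 ≤ (m:ℝ) * (inner ℂ (G f) f : ℂ).re :=
          mul_nonneg (Nat.cast_nonneg m) hγfnn
        linarith
      have hsnfnn : 0 ≤ (inner ℂ ((X - F n) f) f : ℂ).re := (hSpos n).2 f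
      have hsngnn : 0 ≤ (inner ℂ ((X - F n) g) g : ℂ).re := (hSpos n).2 g
      have hsqrt : Real.sqrt ((inner ℂ ((X - F n) g) g : ℂ).re * (inner ℂ ((X - F n) f) f : ℂ).re)
          ≤ ε/6 := by
        have h1 : (inner ℂ ((X - F n) g) g : ℂ).re * (inner ℂ ((X - F n) f) f : ℂ).re ≤ B * r :=
          mul_le_mul hsng hsnf hsnfnn hBpos.le
        have h2 : B * r ≤ (ε/6)^2 := by
          have h3 : r ≤ (ε/6)^2 / B := min_le_right _ _
          calc B * r ≤ B * ((ε/6)^2 / B) := mul_le_mul_of_nonneg_left h3 hBpos.le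
            _ = (ε/6)^2 := by rw [mul_comm, div_mul_cancel₀ _ hBpos.ne']
        calc Real.sqrt ((inner ℂ ((X - F n) g) g : ℂ).re * (inner ℂ ((X - F n) f) f : ℂ).re)
            ≤ Real.sqrt ((ε/6)^2) := Real.sqrt_le_sqrt (le_trans h1 h2)
          _ = ε/6 := Real.sqrt_sq (by linarith)
      have hw : g + f = w := by rw [add_comm]; exact hfg
      have hsub := form_subadd (X - F n) (hSpos n) g f
      rw [hw] at hsub
      have hpn : (inner ℂ (P n w) w : ℂ).re
          ≤ (inner ℂ (A w) w : ℂ).re + δ - (inner ℂ ((X - F n) g) g : ℂ).re := by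
        have h1 := ps_le' (hP n) w g f hw
        have h2 : (inner ℂ (F n g) g : ℂ).re
            = (inner ℂ (X g) g : ℂ).re - (inner ℂ ((X - F n) g) g : ℂ).re := by
          rw [hSform]; ring
        rw [h2] at h1
        have h3 : (1:ℝ) * (inner ℂ (G f) f : ℂ).re ≤ (m:ℝ) * (inner ℂ (G f) f : ℂ).re :=
          mul_le_mul_of_nonneg_right hm1' hγfnn
        linarith
      have hfin := hSrec n w
      linarith
    intro n v
    cases n with
    | zero =>
      rw [hSform, hF0]
      have := hAnn v
      linarith
    | succ n => exact main n v
  -- claim α : Q n ≤ X - L in form sense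
  have hrange : ∀ (j : ℕ) (w : H), ∑ k ∈ Finset.range j, (inner ℂ (P k w) w : ℂ).re
      = (inner ℂ (X w) w : ℂ).re - (inner ℂ (F j w) w : ℂ).re := by
    intro j w
    induction j with
    | zero => rw [hF0]; simp
    | succ j ih =>
      rw [Finset.sum_range_succ, ih, hφrec j w]
      ring
  have claimα : ∀ n v, (inner ℂ (Q n v) v : ℂ).re
      ≤ (inner ℂ (X v) v : ℂ).re - (inner ℂ (L v) v : ℂ).re := by
    intro n w
    refine le_of_forall_pos_le_add ?_
    intro ε hε
    have hxwnn : 0 ≤ (inner ℂ (X w) w : ℂ).re := hX.2 w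
    have hlw : (inner ℂ (L w) w : ℂ).re ≤ (inner ℂ (X w) w : ℂ).re := by
      have := hLleF 0 w
      rw [hF0] at this
      exact this
    set σ : ℝ := (inner ℂ (X w) w : ℂ).re - (inner ℂ (L w) w : ℂ).re with hσ
    have hσnn : 0 ≤ σ := by linarith
    set C : ℝ := σ + 1 with hC
    have hCpos : 0 < C := by linarith
    set η : ℝ := min (ε/20) ((ε/8)^2 / C) with hη
    have hηpos : 0 < η := lt_min (by linarith) (div_pos (by positivity) hCpos)
    have hηε : η ≤ ε/20 := min_le_left _ _
    have hηC : η ≤ (ε/8)^2 / C := min_le_right _ _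
    -- choose M
    obtain ⟨N, hN⟩ := (Filter.eventually_atTop).mp
      ((hFtend w).eventually_lt_const (by linarith : (inner ℂ (L w) w : ℂ).re < (inner ℂ (L w) w : ℂ).re + η))
    set M := max N (max n 1) with hM
    have hMN : N ≤ M := le_max_left _ _
    have hMn : n ≤ M := le_trans (le_max_left _ _) (le_max_right _ _)
    have hM1 : 1 ≤ M := le_trans (le_max_right _ _) (le_max_right _ _)
    have hM1' : (1:ℝ) ≤ (M:ℝ) := by exact_mod_cast hM1
    have hMpos : (0:ℝ) < M := by linarith
    have hfM : (inner ℂ (F M w) w : ℂ).re < (inner ℂ (L w) w : ℂ).re + η := hN M hMN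
    -- find m in [M, 2M) with small p_m
    have hIcoNe : (Finset.Ico M (2*M)).Nonempty := by
      rw [Finset.nonempty_Ico]; omega
    have hIcoSum : ∑ k ∈ Finset.Ico M (2*M), (inner ℂ (P k w) w : ℂ).re ≤ η := by
      rw [Finset.sum_Ico_eq_sub _ (by omega : M ≤ 2*M), hrange, hrange]
      have h2M := hLleF (2*M) w
      linarith
    have hconst : ∑ _k ∈ Finset.Ico M (2*M), (η/M : ℝ) = η := by
      rw [Finset.sum_const, Nat.card_Ico]
      have h1 : 2*M - M = M := by omega
      rw [h1, nsmul_eq_mul]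
      field_simp
    have hle2 : ∑ k ∈ Finset.Ico M (2*M), (inner ℂ (P k w) w : ℂ).re
        ≤ ∑ _k ∈ Finset.Ico M (2*M), (η/M : ℝ) := by
      rw [hconst]; exact hIcoSum
    obtain ⟨m, hmIco, hpm⟩ := Finset.exists_le_of_sum_le hIcoNe hle2
    obtain ⟨hMm, hm2M⟩ := Finset.mem_Ico.mp hmIco
    have hm2M' : (m:ℝ) < 2*M := by exact_mod_cast hm2M
    have hMm' : (M:ℝ) ≤ (m:ℝ) := by exact_mod_cast hMm
    have hnm' : (n:ℝ) ≤ (m:ℝ) := by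
      have : (n:ℝ) ≤ (M:ℝ) := by exact_mod_cast hMn
      linarith
    -- approximate decomposition for P m at w
    obtain ⟨u, v', huv, happ⟩ := ps_approx (hP m) w (div_pos hηpos hMpos)
    have hfu : 0 ≤ (inner ℂ (F m u) u : ℂ).re := (hFpos m).2 u
    have hγnn : 0 ≤ (inner ℂ (G v') v' : ℂ).re := hG.2 v'
    have hpmw : (inner ℂ (P m w) w : ℂ).re ≤ η/M := hpm
    have hγ : (inner ℂ (G v') v' : ℂ).re ≤ 2*(η/M) := by linarith
    have hmγ : (m:ℝ) * (inner ℂ (G v') v' : ℂ).re ≤ 4*η := by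
      calc (m:ℝ) * (inner ℂ (G v') v' : ℂ).re ≤ (2*M) * (inner ℂ (G v') v' : ℂ).re :=
            mul_le_mul_of_nonneg_right hm2M'.le hγnn
        _ ≤ (2*M) * (2*(η/M)) := mul_le_mul_of_nonneg_left hγ (by linarith)
        _ = 4*η := by field_simp; ring
    have hnγ : (n:ℝ) * (inner ℂ (G v') v' : ℂ).re ≤ 4*η := by
      have : (n:ℝ) * (inner ℂ (G v') v' : ℂ).re ≤ (m:ℝ) * (inner ℂ (G v') v' : ℂ).re :=
        mul_le_mul_of_nonneg_right hnm' hγnn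
      linarith
    -- q_n(w) ≤ n γ(v') + x(u)
    have hq1 : (inner ℂ (Q n w) w : ℂ).re
        ≤ (n:ℝ) * (inner ℂ (G v') v' : ℂ).re + (inner ℂ (X u) u : ℂ).re := by
      have h1 := ps_le' (hQ n) w v' u (by rw [add_comm]; exact huv)
      rw [form_nsmul] at h1
      exact h1
    -- x(u) ≤ s_m(u) + 2η
    have hxu : (inner ℂ (X u) u : ℂ).re ≤ (inner ℂ ((X - F m) u) u : ℂ).re + 2*η := by
      have h1 : (inner ℂ ((X - F m) u) u : ℂ).re
          = (inner ℂ (X u) u : ℂ).re - (inner ℂ (F m u) u : ℂ).re := hSform m u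
      have h2 : (inner ℂ (F m u) u : ℂ).re ≤ 2*(η/M) := by linarith
      have h3 : 2*(η/M) ≤ 2*η := by
        have : η/M ≤ η := by
          rw [div_le_iff₀ hMpos]
          nlinarith
        linarith
      linarith
    -- s_m(u) via subadditivity
    have hu : u = w + (-v') := by
      have : u = w - v' := eq_sub_of_add_eq huv
      rw [this, sub_eq_add_neg]
    have hsub := form_subadd (X - F m) (hSpos m) w (-v')
    rw [← hu, form_neg] at hsub
    have hsmv : (inner ℂ ((X - F m) v') v' : ℂ).re ≤ 4*η := by
      have := hSleG m v'
      linarith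
    have hsmw : (inner ℂ ((X - F m) w) w : ℂ).re ≤ σ := by
      rw [hSform]
      have := hLleF m w
      linarith
    have hsmwnn : 0 ≤ (inner ℂ ((X - F m) w) w : ℂ).re := (hSpos m).2 w
    have hsmvnn : 0 ≤ (inner ℂ ((X - F m) v') v' : ℂ).re := (hSpos m).2 v'
    have hsqrt : Real.sqrt ((inner ℂ ((X - F m) w) w : ℂ).re * (inner ℂ ((X - F m) v') v' : ℂ).re)
        ≤ ε/4 := by
      have h1 : (inner ℂ ((X - F m) w) w : ℂ).re * (inner ℂ ((X - F m) v') v' : ℂ).re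
          ≤ C * (4*η) := mul_le_mul (by linarith) hsmv hsmvnn hCpos.le
      have h2 : C * (4*η) ≤ (ε/4)^2 := by
        have h3 : C * η ≤ (ε/8)^2 := by
          calc C * η ≤ C * ((ε/8)^2 / C) := mul_le_mul_of_nonneg_left hηC hCpos.le
            _ = (ε/8)^2 := by rw [mul_comm, div_mul_cancel₀ _ hCpos.ne']
        nlinarith
      calc Real.sqrt ((inner ℂ ((X - F m) w) w : ℂ).re * (inner ℂ ((X - F m) v') v' : ℂ).re)
          ≤ Real.sqrt ((ε/4)^2) := Real.sqrt_le_sqrt (le_trans h1 h2)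
        _ = ε/4 := Real.sqrt_sq (by linarith)
    -- collect
    have h20 : 10 * η ≤ ε/2 := by linarith
    linarith
  -- the key form identity
  have keyform : ∀ v, (inner ℂ (A v) v : ℂ).re
      = (inner ℂ (X v) v : ℂ).re - (inner ℂ (L v) v : ℂ).re := by
    intro v
    have h1 : (inner ℂ (A v) v : ℂ).re ≤ (inner ℂ (X v) v : ℂ).re - (inner ℂ (L v) v : ℂ).re := by
      refine le_of_tendsto (hQtend v) ?_
      filter_upwards with n using claimα n v
    have h2 : (inner ℂ (X v) v : ℂ).re - (inner ℂ (L v) v : ℂ).re ≤ (inner ℂ (A v) v : ℂ).re := by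
      have htend : Tendsto (fun n => (inner ℂ ((X - F n) v) v : ℂ).re) atTop
          (𝓝 ((inner ℂ (X v) v : ℂ).re - (inner ℂ (L v) v : ℂ).re)) := by
        have := (hFtend v).const_sub ((inner ℂ (X v) v : ℂ).re)
        refine this.congr ?_
        intro n
        rw [hSform]
      refine le_of_tendsto htend ?_
      filter_upwards with n using claimβ n v
    linarith
  -- self-adjointness of L and A
  have hLsa : IsSelfAdjoint L := by
    rw [ContinuousLinearMap.isSelfAdjoint_iff_isSymmetric]
    intro u v
    have h1 : Tendsto (fun n => (inner ℂ (F n u) v : ℂ)) atTop (𝓝 (inner ℂ (L u) v)) :=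
      (hFlim u).inner tendsto_const_nhds
    have h2 : Tendsto (fun n => (inner ℂ u (F n v) : ℂ)) atTop (𝓝 (inner ℂ u (L v))) :=
      tendsto_const_nhds.inner (hFlim v)
    have heq : (fun n => (inner ℂ (F n u) v : ℂ)) = fun n => (inner ℂ u (F n v) : ℂ) := by
      funext n; exact sa_inner (F n) (hFsa n) u v
    rw [heq] at h1
    exact tendsto_nhds_unique h1 h2
  have hAsa : IsSelfAdjoint A := by
    rw [ContinuousLinearMap.isSelfAdjoint_iff_isSymmetric]
    intro u v
    have h1 : Tendsto (fun n => (inner ℂ (Q n u) v : ℂ)) atTop (𝓝 (inner ℂ (A u) v)) :=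
      (hQlim u).inner tendsto_const_nhds
    have h2 : Tendsto (fun n => (inner ℂ u (Q n v) : ℂ)) atTop (𝓝 (inner ℂ u (A v))) :=
      tendsto_const_nhds.inner (hQlim v)
    have heq : (fun n => (inner ℂ (Q n u) v : ℂ)) = fun n => (inner ℂ u (Q n v) : ℂ) := by
      funext n; exact sa_inner (Q n) ((hQ n).1.isSelfAdjoint) u v
    rw [heq] at h1
    exact tendsto_nhds_unique h1 h2
  have hLXA : L = X - A := by
    refine ext_of_re_form hLsa (hX.isSelfAdjoint.sub hAsa) ?_
    intro v
    rw [form_sub, keyform v]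
    ring
  refine ⟨hLXA, ?_⟩
  -- part 2
  intro F' P' hF'0 horb'
  have hFP : ∀ n, F' n = F n ∧ P' n = P n := by
    intro n
    induction n with
    | zero =>
      have hFeq : F' 0 = F 0 := by rw [hF'0, hF0]
      refine ⟨hFeq, ?_⟩
      have h1 := (horb' 0).1
      rw [hFeq] at h1
      exact ps_unique h1 (hP 0)
    | succ n ih =>
      have hFeq : F' (n+1) = F (n+1) := by
        rw [(horb' n).2, hrec n, ih.1, ih.2]
      refine ⟨hFeq, ?_⟩
      have h1 := (horb' (n+1)).1
      rw [hFeq] at h1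
      exact ps_unique h1 (hP (n+1))
  intro x
  have hPP : (fun n => P' n x) = fun n => P n x := by
    funext n; rw [(hFP n).2]
  rw [hPP]
  -- partial sums telescope
  have hpartial : ∀ n, ∑ k ∈ Finset.range n, P k x = X x - F n x := by
    intro n
    induction n with
    | zero => simp [hF0]
    | succ n ih =>
      rw [Finset.sum_range_succ, ih, hrec n]
      simp [ContinuousLinearMap.sub_apply]
      abel
  have preal : Summable (fun k => (inner ℂ (P k x) x : ℂ).re) := by
    refine summable_of_sum_range_le (c := (inner ℂ (X x) x : ℂ).re) (fun k => hPnn k x)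
      (fun n => ?_)
    rw [hrange n x]
    have h0 : (0:ℝ) ≤ (inner ℂ (F n x) x : ℂ).re := (hFpos n).2 x
    linarith
  have psumnn : ∀ t : Finset ℕ, 0 ≤ ∑ k ∈ t, (inner ℂ (P k x) x : ℂ).re :=
    fun t => Finset.sum_nonneg (fun k _ => hPnn k x)
  have bound : ∀ t : Finset ℕ,
      ‖∑ k ∈ t, P k x‖^2 ≤ ‖X‖ * ∑ k ∈ t, (inner ℂ (P k x) x : ℂ).re := by
    intro t
    have hTapp : ∀ v : H, (∑ k ∈ t, P k) v = ∑ k ∈ t, P k v := by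
      intro v
      simp [ContinuousLinearMap.sum_apply]
    have hTsa : IsSelfAdjoint (∑ k ∈ t, P k) := by
      show star _ = _
      rw [star_sum]
      exact Finset.sum_congr rfl fun k _ => (hP k).1.isSelfAdjoint
    have hTform : ∀ v : H, (inner ℂ ((∑ k ∈ t, P k) v) v : ℂ).re
        = ∑ k ∈ t, (inner ℂ (P k v) v : ℂ).re := by
      intro v
      rw [hTapp, sum_inner]
      exact Complex.re_sum _ _
    have hTpos : (∑ k ∈ t, P k).IsPositive := by
      refine ⟨ContinuousLinearMap.isSelfAdjoint_iff_isSymmetric.mp hTsa, fun v => ?_⟩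
      show (0:ℝ) ≤ (inner ℂ ((∑ k ∈ t, P k) v) v : ℂ).re
      rw [hTform]
      exact Finset.sum_nonneg (fun k _ => hPnn k v)
    have hTleX : ∀ v : H, (inner ℂ ((∑ k ∈ t, P k) v) v : ℂ).re ≤ (inner ℂ (X v) v : ℂ).re := by
      intro v
      rw [hTform]
      obtain ⟨N, hN⟩ := Finset.exists_nat_subset_range t
      have h1 : ∑ k ∈ t, (inner ℂ (P k v) v : ℂ).re
          ≤ ∑ k ∈ Finset.range N, (inner ℂ (P k v) v : ℂ).re :=
        Finset.sum_le_sum_of_subset_of_nonneg hN (fun k _ _ => hPnn k v)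
      rw [hrange N v] at h1
      have h0 : (0:ℝ) ≤ (inner ℂ (F N v) v : ℂ).re := (hFpos N).2 v
      linarith
    set T := ∑ k ∈ t, P k with hT
    set c : ℝ := ‖T x‖ with hc
    have hcnn : 0 ≤ c := norm_nonneg _
    have h4 := gen_cs T hTpos x (T x)
    have hself : ‖(inner ℂ (T x) (T x) : ℂ)‖ = c^2 := by
      rw [inner_self_eq_norm_sq_to_K, norm_pow, RCLike.norm_ofReal, sq_abs]
    rw [hself] at h4
    have h5 : (inner ℂ (T (T x)) (T x) : ℂ).re ≤ ‖X‖ * c^2 := by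
      have h6 : (inner ℂ (T (T x)) (T x) : ℂ).re ≤ (inner ℂ (X (T x)) (T x) : ℂ).re := hTleX (T x)
      have h7 : (inner ℂ (X (T x)) (T x) : ℂ).re ≤ ‖(inner ℂ (X (T x)) (T x) : ℂ)‖ :=
        Complex.re_le_norm _
      have h8 : ‖(inner ℂ (X (T x)) (T x) : ℂ)‖ ≤ ‖X (T x)‖ * ‖T x‖ := norm_inner_le_norm _ _
      have h9 : ‖X (T x)‖ ≤ ‖X‖ * ‖T x‖ := X.le_opNorm _
      have h10 : ‖X (T x)‖ * ‖T x‖ ≤ (‖X‖ * ‖T x‖) * ‖T x‖ :=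
        mul_le_mul_of_nonneg_right h9 (norm_nonneg _)
      calc (inner ℂ (T (T x)) (T x) : ℂ).re ≤ ‖X (T x)‖ * ‖T x‖ := by linarith
        _ = ‖X (T x)‖ * c := rfl
        _ ≤ ‖X‖ * c^2 := by nlinarith [h9]
    have hww : ‖∑ k ∈ t, P k x‖ = c := by rw [hc, hTapp]
    rw [hww]
    have hrw : (inner ℂ (T x) x : ℂ).re = ∑ k ∈ t, (inner ℂ (P k x) x : ℂ).re := hTform x
    rcases eq_or_lt_of_le hcnn with hc0 | hcpos
    · rw [← hc0]
      simpa using mul_nonneg (norm_nonneg X) (psumnn t)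
    · have hc2 : 0 < c^2 := by positivity
      have h11 : (c^2)^2 ≤ (inner ℂ (T x) x : ℂ).re * (‖X‖ * c^2) := by
        calc (c^2)^2 ≤ (inner ℂ (T x) x : ℂ).re * (inner ℂ (T (T x)) (T x) : ℂ).re := h4
          _ ≤ (inner ℂ (T x) x : ℂ).re * (‖X‖ * c^2) :=
            mul_le_mul_of_nonneg_left h5 (hTpos.2 x)
      rw [hrw] at h11
      nlinarith [h11, hc2]
  have hsummable : Summable (fun n => P n x) := by
    rw [summable_iff_vanishing]
    intro e he
    obtain ⟨ε, hεpos, hball⟩ := Metric.mem_nhds_iff.mp he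
    set δ : ℝ := ε^2/(2*(‖X‖+1)) with hδ
    have hXnn : (0:ℝ) ≤ ‖X‖ := norm_nonneg _
    have hδpos : 0 < δ := by positivity
    obtain ⟨s, hs⟩ := preal.vanishing (Metric.ball_mem_nhds (0:ℝ) hδpos)
    refine ⟨s, fun t hts => ?_⟩
    apply hball
    rw [Metric.mem_ball, dist_zero_right]
    have h1 := hs t hts
    rw [Metric.mem_ball, Real.dist_eq, sub_zero] at h1
    have h2 : ∑ k ∈ t, (inner ℂ (P k x) x : ℂ).re < δ := lt_of_abs_lt h1
    have h3 := bound t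
    have h4 : ‖X‖ * ∑ k ∈ t, (inner ℂ (P k x) x : ℂ).re ≤ (‖X‖+1) * δ := by
      have := psumnn t
      nlinarith
    have h5 : (‖X‖+1) * δ = ε^2/2 := by
      rw [hδ]
      field_simp
    have h6 : ‖∑ k ∈ t, P k x‖^2 < ε^2 := by
      rw [h5] at h4
      nlinarith
    nlinarith [norm_nonneg (∑ k ∈ t, P k x), hεpos, h6]
  rw [hsummable.hasSum_iff_tendsto_nat]
  have : Tendsto (fun n => X x - F n x) atTop (𝓝 (X x - L x)) :=
    (hFlim x).const_sub (X x)
  have hAx : X x - L x = A x := by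
    rw [hLXA]
    simp [ContinuousLinearMap.sub_apply]
  rw [hAx] at this
  refine this.congr ?_
  intro n
  rw [hpartial n]
end
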